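/- For n ≥ 2 players with maximum achievable utilities L_1 = 1 and L_2 = ⋯ = L_n = ε, where 0 < ε ≤ (√(4n−3) − 1)/(2(n−1)), the bound 1 − min_{1 ≤ l ≤ n−1} [(1 + (l−1)√ε)² + (n−l)ε]/(n(1+(l−1)ε)) is at least 1 − 1/n − (n−1)ε/n. Consequently, the supremum over all L ∈ (0,1]^n of the proportional-fairness upper bound equals 1 − 1/n. -/

import Mathlib

lemma inf_le_at_one (n : ℕ) (hn : 2 ≤ n) (ε : ℝ) :
    (Finset.Icc 1 (n-1)).inf' (Finset.nonempty_Icc.mpr (Nat.le_sub_of_add_le hn))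
        (fun l => ((1 + ((l : ℝ) - 1)*Real.sqrt ε)^2 + ((n : ℝ) - l)*ε) /
          ((n : ℝ) * (1 + ((l : ℝ) - 1)*ε))) ≤ (1 + ((n : ℝ) - 1)*ε)/n := by
  have h1 : (1 : ℕ) ∈ Finset.Icc 1 (n-1) := by
    simp [Finset.mem_Icc]; omega
  have := Finset.inf'_le (fun l : ℕ => ((1 + ((l : ℝ) - 1)*Real.sqrt ε)^2 + ((n : ℝ) - l)*ε) /
          ((n : ℝ) * (1 + ((l : ℝ) - 1)*ε))) h1
  calc _ ≤ ((1 + ((1 : ℝ) - 1)*Real.sqrt ε)^2 + ((n : ℝ) - 1)*ε) /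
          ((n : ℝ) * (1 + ((1 : ℝ) - 1)*ε)) := by simpa only [Nat.cast_one] using this
    _ = (1 + ((n : ℝ) - 1)*ε)/n := by ring_nf

theorem stmt_11 (n : ℕ) (hn : 2 ≤ n) (ε : ℝ)
    (hε : 0 < ε) (hε2 : ε ≤ (Real.sqrt (4*n - 3) - 1) / (2*((n : ℝ) - 1))) :
    (1 - 1/(n : ℝ) - ((n : ℝ) - 1)*ε/n ≤
      1 - (Finset.Icc 1 (n-1)).inf' (Finset.nonempty_Icc.mpr (by omega))
        (fun l => ((1 + ((l : ℝ) - 1)*Real.sqrt ε)^2 + ((n : ℝ) - l)*ε) /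
          ((n : ℝ) * (1 + ((l : ℝ) - 1)*ε)))) ∧
    (∀ δ > (0 : ℝ), ∃ ε' : ℝ, 0 < ε' ∧
      ε' ≤ (Real.sqrt (4*n - 3) - 1) / (2*((n : ℝ) - 1)) ∧
      1 - 1/(n : ℝ) - δ <
        1 - (Finset.Icc 1 (n-1)).inf' (Finset.nonempty_Icc.mpr (by omega))
          (fun l => ((1 + ((l : ℝ) - 1)*Real.sqrt ε')^2 + ((n : ℝ) - l)*ε') /
            ((n : ℝ) * (1 + ((l : ℝ) - 1)*ε')))) := by
  have hn0 : (0 : ℝ) < n := by positivity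
  have hn1 : (1 : ℝ) < n := by exact_mod_cast hn.trans_lt' one_lt_two
  have hB : 0 < (Real.sqrt (4*n - 3) - 1) / (2*((n : ℝ) - 1)) := by
    have h43 : (1 : ℝ) < 4*(n : ℝ) - 3 := by linarith
    have : (1 : ℝ) < Real.sqrt (4*n - 3) := by
      rw [show (1:ℝ) = Real.sqrt 1 by simp]
      exact Real.sqrt_lt_sqrt (by norm_num) h43
    apply div_pos <;> linarith
  constructor
  · have := inf_le_at_one n hn ε
    have heq : 1 - 1/(n : ℝ) - ((n : ℝ) - 1)*ε/n = 1 - (1 + ((n : ℝ) - 1)*ε)/n := by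
      field_simp; ring
    rw [heq]
    linarith
  · intro δ hδ
    refine ⟨min ((Real.sqrt (4*n - 3) - 1) / (2*((n : ℝ) - 1))) (δ/n),
      lt_min hB (by positivity), min_le_left _ _, ?_⟩
    set ε' := min ((Real.sqrt (4*n - 3) - 1) / (2*((n : ℝ) - 1))) (δ/n) with hε'
    have h1 := inf_le_at_one n hn ε'
    have hle : ε' ≤ δ/n := min_le_right _ _
    have : (1 + ((n : ℝ) - 1)*ε')/n < 1/n + δ := by
      rw [div_lt_iff₀ hn0]
      have : ((n:ℝ) - 1)*ε' ≤ ((n:ℝ)-1)*(δ/n) := by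
        apply mul_le_mul_of_nonneg_left hle (by linarith)
      have h2 : ((n:ℝ)-1)*(δ/n) < δ*n := by
        rw [← mul_div_assoc, div_lt_iff₀ hn0]
        nlinarith [mul_lt_mul_of_pos_left (show (n:ℝ)-1 < n*n by nlinarith) hδ]
      have : (1 : ℝ)/n * n = 1 := by field_simp
      nlinarith
    linarith
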